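/- Let G be a countably infinite group and let (g_n)_{n∈ω} be an injective sequence in G. Then there exists a subset X ⊆ FP((g_n)) such that Δ(X) = {e} ∪ FP((g_n)) ∪ (FP((g_n)))⁻¹. -/

import Mathlib

open scoped Pointwise

/-- The combinatorial derivation: `Δ(A) = {g ∈ G : gA ∩ A is infinite}`. -/
def Delta {G : Type*} [Group G] (A : Set G) : Set G :=
  {g : G | ((g • A) ∩ A).Infinite}

/-- The set `FP((g_n))` of all finite products `g_{i₁} g_{i₂} ⋯ g_{i_k}` with
`i₁ < i₂ < … < i_k`, `k ≥ 1`. -/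
def FP {G : Type*} [Group G] (g : ℕ → G) : Set G :=
  {x : G | ∃ l : List ℕ, l ≠ [] ∧ l.Chain' (· < ·) ∧ (l.map g).prod = x}

namespace DeltaAux

variable {G : Type*} [Group G]

/-- The block created at step `n`. -/
def Blk (b : ℕ → G) (f : ℕ → ℕ) (c : ℕ → G) (n : ℕ) : Set G :=
  {c n, b (f n) * c n}

/-- The union of blocks below `n`. -/
def Xlt (b : ℕ → G) (f : ℕ → ℕ) (c : ℕ → G) (n : ℕ) : Set G :=
  ⋃ m < n, Blk b f c m

/-- The mixed quotients created at step `n`. -/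
def MQ (b : ℕ → G) (f : ℕ → ℕ) (c : ℕ → G) (n : ℕ) : Set G :=
  ⋃ m < n, ⋃ x ∈ Blk b f c n, ⋃ y ∈ Blk b f c m, ({y * x⁻¹, x * y⁻¹} : Set G)

/-- The mixed quotients created before step `n`. -/
def MQlt (b : ℕ → G) (f : ℕ → ℕ) (c : ℕ → G) (n : ℕ) : Set G :=
  ⋃ k < n, MQ b f c k

lemma Blk_finite (b : ℕ → G) (f : ℕ → ℕ) (c : ℕ → G) (n : ℕ) : (Blk b f c n).Finite :=
  (Set.finite_singleton _).insert _

lemma Xlt_finite (b : ℕ → G) (f : ℕ → ℕ) (c : ℕ → G) (n : ℕ) : (Xlt b f c n).Finite :=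
  (Set.finite_Iio n).biUnion fun m _ => Blk_finite b f c m

lemma MQ_finite (b : ℕ → G) (f : ℕ → ℕ) (c : ℕ → G) (n : ℕ) : (MQ b f c n).Finite :=
  (Set.finite_Iio n).biUnion fun m _ =>
    (Blk_finite b f c n).biUnion fun _ _ =>
      (Blk_finite b f c m).biUnion fun _ _ => (Set.finite_singleton _).insert _

lemma MQlt_finite (b : ℕ → G) (f : ℕ → ℕ) (c : ℕ → G) (n : ℕ) : (MQlt b f c n).Finite :=
  (Set.finite_Iio n).biUnion fun k _ => MQ_finite b f c k

lemma Blk_congr {b : ℕ → G} {f : ℕ → ℕ} {c c' : ℕ → G} {m : ℕ} (h : c m = c' m) :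
    Blk b f c m = Blk b f c' m := by simp [Blk, h]

lemma Xlt_congr {b : ℕ → G} {f : ℕ → ℕ} {c c' : ℕ → G} {n : ℕ}
    (h : ∀ m < n, c m = c' m) : Xlt b f c n = Xlt b f c' n := by
  unfold Xlt
  exact Set.iUnion₂_congr fun m hm => Blk_congr (h m hm)

lemma MQlt_congr {b : ℕ → G} {f : ℕ → ℕ} {c c' : ℕ → G} {n : ℕ}
    (h : ∀ m < n, c m = c' m) : MQlt b f c n = MQlt b f c' n := by
  unfold MQlt MQ
  refine Set.iUnion₂_congr fun k hk => Set.iUnion₂_congr fun m hm => ?_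
  rw [Blk_congr (h k hk), Blk_congr (h m (hm.trans hk))]

/-- The condition at step `n`, for history `h` and new index value `v`. -/
def Q (g b : ℕ → G) (f : ℕ → ℕ) (L : ℕ → List ℕ) (h : ℕ → ℕ) (n v : ℕ) : Prop :=
  (∀ i ∈ L (f n), i < v) ∧
  (∀ u ∈ ({1, b (f n)} : Set G), u * g v ∉ Xlt b f (fun m => g (h m)) n) ∧
  (∀ u ∈ ({1, b (f n)} : Set G), ∀ z ∈ Xlt b f (fun m => g (h m)) n,
     (u * g v) * z⁻¹ ∉ MQlt b f (fun m => g (h m)) n ∧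
     z * (u * g v)⁻¹ ∉ MQlt b f (fun m => g (h m)) n)

/-- Dependent choice along `ℕ` with full history. -/
lemma seq_choice {Q : (ℕ → ℕ) → ℕ → ℕ → Prop}
    (Hdep : ∀ h h' n v, (∀ m < n, h m = h' m) → Q h n v → Q h' n v)
    (H : ∀ h n, ∃ v, Q h n v) : ∃ j : ℕ → ℕ, ∀ n, Q j n (j n) := by
  classical
  let A : ℕ → (ℕ → ℕ) := fun n =>
    Nat.rec (fun _ => 0) (fun n An => Function.update An n (H An n).choose) n
  have hA : ∀ n, A (n + 1) = Function.update (A n) n (H (A n) n).choose := fun n => rfl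
  set j : ℕ → ℕ := fun n => A (n + 1) n with hj
  have agree : ∀ n m, m < n → A n m = j m := by
    intro n
    induction n with
    | zero => intro m hm; omega
    | succ n ih =>
      intro m hm
      rcases eq_or_lt_of_le (Nat.lt_succ_iff.mp hm) with h | h
      · subst h; rfl
      · rw [hA n, Function.update_of_ne (by omega), ih m h]
  refine ⟨j, fun n => ?_⟩
  have hjv : j n = (H (A n) n).choose := by
    show A (n + 1) n = _
    rw [hA n, Function.update_self]
  have hspec := (H (A n) n).choose_spec
  rw [← hjv] at hspec
  exact Hdep (A n) j n (j n) (agree n) hspec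

lemma mul_mem_FP {g : ℕ → G} {x : G} {l : List ℕ} (hc : l.Chain' (· < ·))
    (hp : (l.map g).prod = x) {v : ℕ} (hv : ∀ i ∈ l, i < v) : x * g v ∈ FP g := by
  refine ⟨l ++ [v], by simp, ?_, by simp [hp]⟩
  rw [List.Chain', List.isChain_append]
  exact ⟨hc, List.isChain_singleton v, fun a ha y hy => by
    simp at hy; subst hy; exact hv a (List.mem_of_mem_getLast? ha)⟩

lemma single_mem_FP (g : ℕ → G) (v : ℕ) : g v ∈ FP g :=
  ⟨[v], by simp, List.isChain_singleton v, by simp⟩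

lemma Q_exists (g b : ℕ → G) (hg : Function.Injective g) (f : ℕ → ℕ) (L : ℕ → List ℕ)
    (h : ℕ → ℕ) (n : ℕ) : ∃ v, Q g b f L h n v := by
  classical
  set c : ℕ → G := fun m => g (h m) with hc
  set U : Set G := {1, b (f n)} with hU
  have hUfin : U.Finite := (Set.finite_singleton _).insert _
  set T : Set G :=
    (⋃ u ∈ U, u⁻¹ • Xlt b f c n) ∪
    (⋃ u ∈ U, ⋃ w ∈ MQlt b f c n, ⋃ z ∈ Xlt b f c n,
      ({u⁻¹ * w * z, u⁻¹ * w⁻¹ * z} : Set G)) with hT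
  have hTfin : T.Finite := by
    refine Set.Finite.union ?_ ?_
    · exact hUfin.biUnion fun u _ => (Xlt_finite b f c n).smul_set
    · exact hUfin.biUnion fun u _ => (MQlt_finite b f c n).biUnion fun w _ =>
        (Xlt_finite b f c n).biUnion fun z _ => (Set.finite_singleton _).insert _
  set Bad : Set ℕ := g ⁻¹' T ∪ {v | ∃ i ∈ L (f n), v ≤ i} with hBad
  have hBadfin : Bad.Finite := by
    refine Set.Finite.union (hTfin.preimage hg.injOn) ?_
    have : {v | ∃ i ∈ L (f n), v ≤ i} = ⋃ i ∈ {i | i ∈ L (f n)}, Set.Iic i := by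
      ext v; simp
    rw [this]
    exact (L (f n)).finite_toSet.biUnion fun i _ => Set.finite_Iic i
  obtain ⟨v, hv⟩ := hBadfin.infinite_compl.nonempty
  have hv1 : g v ∉ T := fun hmem => hv (Or.inl hmem)
  have hv2 : ∀ i ∈ L (f n), i < v := by
    intro i hi
    by_contra hlt
    exact hv (Or.inr ⟨i, hi, by omega⟩)
  refine ⟨v, hv2, ?_, ?_⟩
  · intro u hu hmem
    refine hv1 (Or.inl ?_)
    refine Set.mem_biUnion hu ?_
    rw [Set.mem_inv_smul_set_iff, smul_eq_mul]
    exact hmem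
  · intro u hu z hz
    constructor
    · intro hmem
      refine hv1 (Or.inr ?_)
      refine Set.mem_biUnion hu (Set.mem_biUnion hmem (Set.mem_biUnion hz ?_))
      left
      group
    · intro hmem
      refine hv1 (Or.inr ?_)
      refine Set.mem_biUnion hu (Set.mem_biUnion hmem (Set.mem_biUnion hz ?_))
      refine Set.mem_insert_iff.mpr (Or.inr ?_)
      rw [Set.mem_singleton_iff]
      group

end DeltaAux

open DeltaAux in
theorem delta_of_subset_of_FP {G : Type*} [Group G] [Countable G] [Infinite G]
    (g : ℕ → G) (hg : Function.Injective g) :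
    ∃ X : Set G, X ⊆ FP g ∧ Delta X = {1} ∪ FP g ∪ (FP g)⁻¹ := by
  classical
  obtain ⟨b, hb⟩ := (Set.to_countable (FP g)).exists_eq_range ⟨g 0, single_mem_FP g 0⟩
  have hbmem : ∀ k, b k ∈ FP g := fun k => hb ▸ Set.mem_range_self k
  set f : ℕ → ℕ := fun n => (Nat.unpair n).1 with hf
  have hbmem' : ∀ k, ∃ l : List ℕ, l ≠ [] ∧ l.Chain' (· < ·) ∧ (l.map g).prod = b k :=
    fun k => hbmem k
  choose L _hL1 hL2 hL3 using hbmem'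
  have Hdep : ∀ h h' n v, (∀ m < n, h m = h' m) → Q g b f L h n v → Q g b f L h' n v := by
    intro h h' n v hagree hQ
    have hx : Xlt b f (fun m => g (h m)) n = Xlt b f (fun m => g (h' m)) n :=
      Xlt_congr fun m hm => by rw [hagree m hm]
    have hm : MQlt b f (fun m => g (h m)) n = MQlt b f (fun m => g (h' m)) n :=
      MQlt_congr fun m hm => by rw [hagree m hm]
    unfold Q at hQ ⊢
    rw [← hx, ← hm]
    exact hQ
  obtain ⟨j, hj⟩ := seq_choice Hdep (Q_exists g b hg f L)
  -- notation
  set c : ℕ → G := fun m => g (j m) with hc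
  -- membership helpers
  have hmemBlkL : ∀ n, c n ∈ Blk b f c n := fun n => Set.mem_insert _ _
  have hmemBlkR : ∀ n, b (f n) * c n ∈ Blk b f c n := fun n =>
    Set.mem_insert_iff.mpr (Or.inr rfl)
  have hBlkXlt : ∀ {m n : ℕ}, m < n → Blk b f c m ⊆ Xlt b f c n := by
    intro m n hm x hx
    exact Set.mem_iUnion₂.mpr ⟨m, hm, hx⟩
  -- the set X
  refine ⟨⋃ n, Blk b f c n, ?_, ?_⟩
  · -- X ⊆ FP g
    intro x hx
    obtain ⟨n, hn⟩ := Set.mem_iUnion.mp hx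
    rcases hn with h | h
    · rw [h]; exact single_mem_FP g (j n)
    · rw [Set.mem_singleton_iff.mp h]
      exact mul_mem_FP (hL2 (f n)) (hL3 (f n)) (hj n).1
  -- injectivity of c
  have hcinj : Function.Injective c := by
    intro m n hmn
    by_contra hne
    have key : ∀ m n : ℕ, m < n → c m ≠ c n := by
      intro m n h hEq
      have h1 : (1 : G) * g (j n) ∉ Xlt b f c n :=
        (hj n).2.1 1 (Set.mem_insert _ _)
      rw [one_mul] at h1
      have h1' : c n ∉ Xlt b f c n := h1
      exact h1' (hEq ▸ hBlkXlt h (hmemBlkL m))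
    rcases lt_trichotomy m n with h | h | h
    · exact key m n h hmn
    · exact hne h
    · exact key n m h hmn.symm
  -- X is infinite
  have hXinf : (⋃ n, Blk b f c n).Infinite :=
    Set.infinite_of_injective_forall_mem hcinj fun n =>
      Set.mem_iUnion.mpr ⟨n, hmemBlkL n⟩
  -- every element of FP is in Delta X
  have hFPDelta : ∀ k, ((b k • ⋃ n, Blk b f c n) ∩ ⋃ n, Blk b f c n).Infinite := by
    intro k
    have hS : {m : ℕ | f m = k}.Infinite := by
      apply Set.infinite_of_injective_forall_mem (f := fun t : ℕ => Nat.pair k t)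
      · intro a a' h
        exact (Nat.pair_eq_pair.mp h).2
      · intro t
        simp [hf, Nat.unpair_pair]
    haveI := hS.to_subtype
    apply Set.infinite_of_injective_forall_mem
      (f := fun m : {m : ℕ | f m = k} => b k * c m.1)
    · intro m1 m2 h
      exact Subtype.ext (hcinj (mul_left_cancel h))
    · intro m
      constructor
      · have hmm : c m.1 ∈ ⋃ n, Blk b f c n := Set.mem_iUnion.mpr ⟨m.1, hmemBlkL m.1⟩
        have := Set.smul_mem_smul_set (a := b k) hmm
        rwa [smul_eq_mul] at this
      · refine Set.mem_iUnion.mpr ⟨m.1, ?_⟩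
        have : b (f m.1) * c m.1 ∈ Blk b f c m.1 := hmemBlkR m.1
        rwa [m.2] at this
  -- disjointness of the MQ sets
  have hMQdisj : ∀ k n : ℕ, k < n → ∀ q ∈ MQ b f c n, q ∉ MQ b f c k := by
    intro k n hkn q hqn hqk
    obtain ⟨m, hm, x, hx, y, hy, hq⟩ := by
      simpa only [MQ, Set.mem_iUnion₂, Set.mem_iUnion] using hqn
    have hyXlt : y ∈ Xlt b f c n := hBlkXlt hm hy
    have hqlt : q ∈ MQlt b f c n := Set.mem_iUnion₂.mpr ⟨k, hkn, hqk⟩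
    have hux : ∃ u ∈ ({1, b (f n)} : Set G), x = u * c n := by
      rcases hx with h | h
      · exact ⟨1, Set.mem_insert _ _, by rw [one_mul, h]⟩
      · exact ⟨b (f n), Set.mem_insert_iff.mpr (Or.inr rfl), Set.mem_singleton_iff.mp h⟩
    obtain ⟨u, hu, rfl⟩ := hux
    have h3 := (hj n).2.2 u hu y hyXlt
    rcases hq with h | h
    · exact h3.2 (h ▸ hqlt)
    · exact h3.1 (h ▸ hqlt)
  -- main equality
  ext q
  simp only [Delta, Set.mem_setOf_eq]
  constructor
  · -- hard direction
    intro hq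
    by_contra hnot
    have hnot1 : q ≠ 1 := by
      intro h; exact hnot (Or.inl (Or.inl h))
    have hnot2 : q ∉ FP g := fun h => hnot (Or.inl (Or.inr h))
    have hnot3 : q⁻¹ ∉ FP g := fun h => hnot (Or.inr (Set.mem_inv.mpr h))
    -- each witness gives a mixed quotient
    have key : ∀ y ∈ (q • ⋃ n, Blk b f c n) ∩ ⋃ n, Blk b f c n,
        ∃ N, q ∈ MQ b f c N ∧ y ∈ Xlt b f c (N + 1) := by
      rintro y ⟨hy1, hy2⟩
      obtain ⟨x, hxX, rfl⟩ := hy1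
      simp only [smul_eq_mul] at hy2 ⊢
      obtain ⟨n, hxB⟩ := Set.mem_iUnion.mp hxX
      obtain ⟨m, hyB⟩ := Set.mem_iUnion.mp hy2
      have hq_eq : q = (q * x) * x⁻¹ := by group
      rcases lt_trichotomy n m with h | h | h
      · -- n < m : q = (q*x) * x⁻¹ with (q*x) ∈ Blk m, x ∈ Blk n
        refine ⟨m, ?_, Set.mem_iUnion₂.mpr ⟨m, by omega, hyB⟩⟩
        refine Set.mem_iUnion₂.mpr ⟨n, h, ?_⟩
        refine Set.mem_iUnion₂.mpr ⟨q * x, hyB, ?_⟩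
        refine Set.mem_iUnion₂.mpr ⟨x, hxB, ?_⟩
        exact Set.mem_insert_iff.mpr (Or.inr (Set.mem_singleton_iff.mpr hq_eq))
      · -- n = m : q ∈ {1, b, b⁻¹}, contradiction
        exfalso
        subst h
        have hcases : q = 1 ∨ q = b (f n) ∨ q = (b (f n))⁻¹ := by
          simp only [Blk, Set.mem_insert_iff, Set.mem_singleton_iff] at hxB hyB
          rcases hxB with h1 | h1 <;> rcases hyB with h2 | h2
          · left; rw [hq_eq, h2, h1]; group
          · right; left; rw [hq_eq, h2, h1]; group
          · right; right; rw [hq_eq, h2, h1]; group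
          · left; rw [hq_eq, h2, h1]; group
        rcases hcases with h | h | h
        · exact hnot1 h
        · exact hnot2 (h ▸ hbmem (f n))
        · refine hnot3 ?_
          rw [h, inv_inv]
          exact hbmem (f n)
      · -- m < n : q = y * x⁻¹ with x ∈ Blk n, y ∈ Blk m
        refine ⟨n, ?_, Set.mem_iUnion₂.mpr ⟨m, by omega, hyB⟩⟩
        refine Set.mem_iUnion₂.mpr ⟨m, h, ?_⟩
        refine Set.mem_iUnion₂.mpr ⟨x, hxB, ?_⟩
        refine Set.mem_iUnion₂.mpr ⟨q * x, hyB, ?_⟩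
        exact Set.mem_insert_iff.mpr (Or.inl hq_eq)
    obtain ⟨y0, hy0⟩ := hq.nonempty
    obtain ⟨N, hN, _⟩ := key y0 hy0
    have hsub : (q • ⋃ n, Blk b f c n) ∩ ⋃ n, Blk b f c n ⊆ Xlt b f c (N + 1) := by
      intro y hy
      obtain ⟨N', hN', hy'⟩ := key y hy
      have : N' = N := by
        rcases lt_trichotomy N' N with h | h | h
        · exact absurd hN' (hMQdisj N' N h q hN)
        · exact h
        · exact absurd hN (hMQdisj N N' h q hN')
      exact this ▸ hy'
    exact hq ((Xlt_finite b f c (N + 1)).subset hsub)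
  · -- easy direction
    intro hq
    rcases hq with (h | h) | h
    · rw [Set.mem_singleton_iff.mp h, one_smul, Set.inter_self]
      exact hXinf
    · obtain ⟨k, rfl⟩ := (hb ▸ h : q ∈ Set.range b)
      exact hFPDelta k
    · rw [Set.mem_inv] at h
      obtain ⟨k, hk⟩ := (hb ▸ h : q⁻¹ ∈ Set.range b)
      have h2 := hFPDelta k
      rw [hk] at h2
      have h3 := h2.smul_set (a := q)
      rwa [Set.smul_set_inter, smul_inv_smul, Set.inter_comm] at h3
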